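/- Suppose M is a simple weight module over the Witt superalgebra W = W_{m,n} (m > 1) with finite-dimensional weight spaces, λ ∈ supp(M), and w ∈ M_λ is a nonzero vector with W_{e_i}·w = 0 for i = 1,...,m. Then the set M' = {v ∈ M : ∃ N ∈ ℕ such that W_α v = 0 for all α ∈ ℤ^m with α_i > N for all i} is a nonzero W-submodule of M, hence equals M. -/

import Mathlib

/-! ### A concrete model of `A_{m,n}` and of the Witt superalgebra `W_{m,n}`

`A_{m,n} = ℂ[t₁^{±1},…,t_m^{±1}] ⊗ Λ(ξ₁,…,ξ_n)` has basis the monomials `t^α ξ_I`,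
indexed by `AIdx m n = (Fin m → ℤ) × Finset (Fin n)`.  The Witt superalgebra
`W_{m,n}` of superderivations of `A_{m,n}` has basis `t^α ξ_I d_i` and
`t^α ξ_I ∂/∂ξ_j` (`d_i = t_i ∂/∂t_i`), indexed by
`WIdx m n = (Fin m → ℤ) × Finset (Fin n) × (Fin m ⊕ Fin n)`. -/

/-- Inversion count: number of pairs `(a,b) ∈ I × J` with `a > b`. -/
def tauF {n : ℕ} (I J : Finset (Fin n)) : ℕ :=
  ((I ×ˢ J).filter fun p => p.2 < p.1).card

/-- The sign arising from `ξ_I · ξ_J = ε(I,J) ξ_{I ∪ J}`:  `(-1)^{τ(I,J)}` when `I, J`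
are disjoint and `0` otherwise. -/
noncomputable def epsF {n : ℕ} (I J : Finset (Fin n)) : ℂ :=
  if Disjoint I J then (-1 : ℂ) ^ tauF I J else 0

/-- Index set of the monomial basis `t^α ξ_I` of `A_{m,n}`. -/
abbrev AIdx (m n : ℕ) := (Fin m → ℤ) × Finset (Fin n)

/-- The underlying vector space of `A_{m,n}`. -/
abbrev ASp (m n : ℕ) := AIdx m n →₀ ℂ

/-- Index set of the basis `t^α ξ_I ∂` (`∂ = d_i` or `∂/∂ξ_j`) of `W_{m,n}`. -/
abbrev WIdx (m n : ℕ) := (Fin m → ℤ) × Finset (Fin n) × (Fin m ⊕ Fin n)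

/-- The underlying vector space of `W_{m,n}`. -/
abbrev WSp (m n : ℕ) := WIdx m n →₀ ℂ

/-- Product of two monomials of `A_{m,n}`. -/
noncomputable def mulMono {m n : ℕ} (u v : AIdx m n) : ASp m n :=
  epsF u.2 v.2 • Finsupp.single (u.1 + v.1, u.2 ∪ v.2) 1

/-- The (supercommutative) multiplication of `A_{m,n}`, as a bilinear map. -/
noncomputable def mulA (m n : ℕ) : ASp m n →ₗ[ℂ] ASp m n →ₗ[ℂ] ASp m n :=
  Finsupp.lsum ℂ fun u => LinearMap.toSpanSingleton ℂ _
    (Finsupp.lsum ℂ fun v => LinearMap.toSpanSingleton ℂ _ (mulMono u v))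

/-- A monomial of `A_{m,n}` multiplied with a basis element of `W_{m,n}`. -/
noncomputable def smulMonoW {m n : ℕ} (u : AIdx m n) (w : WIdx m n) : WSp m n :=
  epsF u.2 w.2.1 • Finsupp.single (u.1 + w.1, u.2 ∪ w.2.1, w.2.2) 1

/-- The action of `A_{m,n}` on `W_{m,n} = A_{m,n} Δ` by multiplication, bilinear. -/
noncomputable def smulAW (m n : ℕ) : ASp m n →ₗ[ℂ] WSp m n →ₗ[ℂ] WSp m n :=
  Finsupp.lsum ℂ fun u => LinearMap.toSpanSingleton ℂ _
    (Finsupp.lsum ℂ fun w => LinearMap.toSpanSingleton ℂ _ (smulMonoW u w))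

/-- The scalar produced when the derivation part `c` (`d_i` or `∂/∂ξ_j`) hits the
monomial `t^β ξ_J`. -/
noncomputable def dCoeff {m n : ℕ} (c : Fin m ⊕ Fin n) (β : Fin m → ℤ) (J : Finset (Fin n)) : ℂ :=
  match c with
  | Sum.inl i => (β i : ℂ)
  | Sum.inr j => if j ∈ J then (-1 : ℂ) ^ ((J.filter (· < j)).card) else 0

/-- The `ξ`-part of the monomial after applying the derivation part `c`. -/
def dSet {m n : ℕ} (c : Fin m ⊕ Fin n) (J : Finset (Fin n)) : Finset (Fin n) :=
  match c with
  | Sum.inl _ => J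
  | Sum.inr j => J.erase j

/-- The basis superderivation `t^α ξ_I ∂` (index `u`) applied to the monomial
`t^β ξ_J` (index `v`), as an element of `A_{m,n}`. -/
noncomputable def derMono {m n : ℕ} (u : WIdx m n) (v : AIdx m n) : ASp m n :=
  dCoeff u.2.2 v.1 v.2 • mulMono (u.1, u.2.1) (v.1, dSet u.2.2 v.2)

/-- The parity of a basis element `t^α ξ_I ∂` of `W_{m,n}`: `|I|` plus the parity of
the derivation part. -/
def parWIdx {m n : ℕ} (u : WIdx m n) : ℕ :=
  u.2.1.card + (match u.2.2 with | Sum.inl _ => 0 | Sum.inr _ => 1)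

/-- Attach a derivation part `b` to an element of `A_{m,n}`: `a ↦ a ∂_b`. -/
noncomputable def attachD {m n : ℕ} (b : Fin m ⊕ Fin n) : ASp m n →ₗ[ℂ] WSp m n :=
  Finsupp.lmapDomain ℂ ℂ (fun a => (a.1, a.2, b))

/-- The superbracket of two basis elements `x = t^α ξ_I ∂_a`, `y = t^β ξ_J ∂_b`:
`[x, y] = x(t^β ξ_J) ∂_b − (−1)^{|x||y|} y(t^α ξ_I) ∂_a`. -/
noncomputable def bracketMono {m n : ℕ} (u v : WIdx m n) : WSp m n :=
  attachD v.2.2 (derMono u (v.1, v.2.1)) -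
    ((-1 : ℂ) ^ (parWIdx u * parWIdx v)) • attachD u.2.2 (derMono v (u.1, u.2.1))

/-- The superbracket of `W_{m,n}`, as a bilinear map. -/
noncomputable def bracketW (m n : ℕ) : WSp m n →ₗ[ℂ] WSp m n →ₗ[ℂ] WSp m n :=
  Finsupp.lsum ℂ fun u => LinearMap.toSpanSingleton ℂ _
    (Finsupp.lsum ℂ fun v => LinearMap.toSpanSingleton ℂ _ (bracketMono u v))

/-- The `ℤ^m`-graded component `(W_{m,n})_α`, spanned by `t^α ξ_I d_i` and
`t^α ξ_I ∂/∂ξ_j`. -/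
noncomputable def Wgr (m n : ℕ) (α : Fin m → ℤ) : Submodule ℂ (WSp m n) :=
  Submodule.span ℂ
    {w | ∃ (I : Finset (Fin n)) (c : Fin m ⊕ Fin n), w = Finsupp.single (α, I, c) 1}

/-- The (`ℤ₂`-)homogeneous component of `W_{m,n}` of parity `p`. -/
noncomputable def Wpar (m n : ℕ) (p : ℕ) : Submodule ℂ (WSp m n) :=
  Submodule.span ℂ
    {w | ∃ u : WIdx m n, parWIdx u % 2 = p % 2 ∧ w = Finsupp.single u 1}

/-- The Cartan element `d_i = t_i ∂/∂t_i` of `W_{m,n}`. -/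
noncomputable def dEl (m n : ℕ) (i : Fin m) : WSp m n :=
  Finsupp.single (0, ∅, Sum.inl i) 1
section Aux

lemma epsF_empty_left {n : ℕ} (J : Finset (Fin n)) : epsF ∅ J = 1 := by
  simp [epsF, tauF]

lemma epsF_empty_right {n : ℕ} (I : Finset (Fin n)) : epsF I ∅ = 1 := by
  simp [epsF, tauF]

lemma attachD_single {m n : ℕ} (b : Fin m ⊕ Fin n) (a : AIdx m n) (c : ℂ) :
    attachD b (Finsupp.single a c) = Finsupp.single (a.1, a.2, b) c := by
  simp [attachD, Finsupp.lmapDomain_apply, Finsupp.mapDomain_single]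

lemma bracketW_single {m n : ℕ} (u v : WIdx m n) :
    bracketW m n (Finsupp.single u 1) (Finsupp.single v 1) = bracketMono u v := by
  simp [bracketW, Finsupp.lsum_single, LinearMap.toSpanSingleton_apply]

lemma parWIdx_d {m n : ℕ} (β : Fin m → ℤ) (i : Fin m) :
    parWIdx ((β, ∅, Sum.inl i) : WIdx m n) = 0 := by
  simp [parWIdx]

lemma dSet_empty {m n : ℕ} (c : Fin m ⊕ Fin n) : dSet c (∅ : Finset (Fin n)) = ∅ := by
  cases c <;> simp [dSet]

lemma dSet_inl {m n : ℕ} (i : Fin m) (J : Finset (Fin n)) :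
    dSet (Sum.inl i : Fin m ⊕ Fin n) J = J := rfl

lemma dCoeff_inl {m n : ℕ} (i : Fin m) (β : Fin m → ℤ) (J : Finset (Fin n)) :
    dCoeff (Sum.inl i : Fin m ⊕ Fin n) β J = (β i : ℂ) := rfl

lemma bracketMono_eq {m n : ℕ} (u v : WIdx m n) :
    bracketMono u v =
      (dCoeff u.2.2 v.1 v.2.1 * epsF u.2.1 (dSet u.2.2 v.2.1)) •
        Finsupp.single (u.1 + v.1, u.2.1 ∪ dSet u.2.2 v.2.1, v.2.2) (1:ℂ)
      - ((-1:ℂ) ^ (parWIdx u * parWIdx v) *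
          (dCoeff v.2.2 u.1 u.2.1 * epsF v.2.1 (dSet v.2.2 u.2.1))) •
        Finsupp.single (u.1 + v.1, v.2.1 ∪ dSet v.2.2 u.2.1, u.2.2) (1:ℂ) := by
  unfold bracketMono derMono mulMono
  simp only [map_smul, attachD_single, smul_smul]
  rw [add_comm v.1 u.1]

lemma bracketMono_d {m n : ℕ} (β γ : Fin m → ℤ) (i : Fin m) (I : Finset (Fin n))
    (c : Fin m ⊕ Fin n) :
    bracketMono ((β, ∅, Sum.inl i) : WIdx m n) ((γ, I, c) : WIdx m n) =
      ((γ i : ℂ)) • Finsupp.single (β + γ, I, c) (1:ℂ)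
      - (dCoeff c β ∅) • Finsupp.single (β + γ, I, Sum.inl i) (1:ℂ) := by
  rw [bracketMono_eq]
  simp only [parWIdx_d, dSet_empty, dSet_inl, dCoeff_inl, epsF_empty_left, epsF_empty_right,
    Finset.empty_union, Finset.union_empty, Nat.zero_mul, pow_zero, one_mul, mul_one]

end Aux

/-- Let `M` be a simple weight module (with respect to the Cartan subalgebra spanned by
`d_1, …, d_m`) over the Witt superalgebra `W = W_{m,n}` (`m > 1`) with
finite-dimensional weight spaces, let `lam ∈ supp M` and let `w` be a nonzero weight
vector of weight `lam` with `W_{e_i} · w = 0` for `i = 1, …, m`.  Then the set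
`M' = {v ∈ M : ∃ N, W_α v = 0 whenever all α_i > N}` is a nonzero `W`-submodule of
`M`, hence equals `M`:  every `v ∈ M` is annihilated by all `W_α` with all `α_i`
sufficiently large. -/
theorem stmt18 (m n : ℕ) (hm : 1 < m) (V : Type*) [AddCommGroup V] [Module ℂ V]
    [Nontrivial V]
    (gV : ZMod 2 → Submodule ℂ V) (hcompl : IsCompl (gV 0) (gV 1))
    (ρ : WSp m n →ₗ[ℂ] Module.End ℂ V)
    (hpar : ∀ (p : ℕ) (x : WSp m n), x ∈ Wpar m n p →
      ∀ q : ZMod 2, ∀ v ∈ gV q, ρ x v ∈ gV (q + (p : ZMod 2)))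
    (hrep : ∀ (p q : ℕ) (x y : WSp m n), x ∈ Wpar m n p → y ∈ Wpar m n q →
      ρ (bracketW m n x y) = ρ x * ρ y - ((-1 : ℂ) ^ (p * q)) • (ρ y * ρ x))
    (hsimp : ∀ P : Submodule ℂ V, P = (P ⊓ gV 0) ⊔ (P ⊓ gV 1) →
      (∀ x : WSp m n, ∀ v ∈ P, ρ x v ∈ P) → P = ⊥ ∨ P = ⊤)
    (hwt : (⨆ μ : Fin m → ℂ, ⨅ i : Fin m, Module.End.eigenspace (ρ (dEl m n i)) (μ i)) = ⊤)
    (hfin : ∀ μ : Fin m → ℂ,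
      FiniteDimensional ℂ ↥(⨅ i : Fin m, Module.End.eigenspace (ρ (dEl m n i)) (μ i)))
    (lam : Fin m → ℂ) (w : V)
    (hw : w ∈ ⨅ i : Fin m, Module.End.eigenspace (ρ (dEl m n i)) (lam i)) (hw0 : w ≠ 0)
    (hann : ∀ i : Fin m, ∀ x ∈ Wgr m n (Pi.single i 1), ρ x w = 0) :
    ∀ v : V, ∃ N : ℕ, ∀ α : Fin m → ℤ,
      (∀ i : Fin m, (N : ℤ) < α i) → ∀ x ∈ Wgr m n α, ρ x v = 0 := by
  classical
  have hXpar : ∀ u : WIdx m n, Finsupp.single u (1:ℂ) ∈ Wpar m n (parWIdx u) :=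
    fun u => Submodule.subset_span ⟨u, rfl, rfl⟩
  have hXgr : ∀ (α : Fin m → ℤ) (I : Finset (Fin n)) (c : Fin m ⊕ Fin n),
      Finsupp.single ((α, I, c) : WIdx m n) (1:ℂ) ∈ Wgr m n α :=
    fun α I c => Submodule.subset_span ⟨I, c, rfl⟩
  -- supercommutation on basis vectors
  have hcomm : ∀ (u v : WIdx m n) (y : V),
      ρ (Finsupp.single u 1) (ρ (Finsupp.single v 1) y) =
        ρ (bracketMono u v) y +
          ((-1:ℂ) ^ (parWIdx u * parWIdx v)) •
            ρ (Finsupp.single v 1) (ρ (Finsupp.single u 1) y) := by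
    intro u v y
    have h := hrep (parWIdx u) (parWIdx v) _ _ (hXpar u) (hXpar v)
    rw [bracketW_single] at h
    rw [h]
    simp only [LinearMap.sub_apply, Module.End.mul_apply, LinearMap.smul_apply]
    module
  -- a bracket of basis vectors is killed by any vector killed in the total degree
  have hbrkill : ∀ (u v : WIdx m n) (y : V),
      (∀ I c, ρ (Finsupp.single ((u.1 + v.1, I, c) : WIdx m n) 1) y = 0) →
      ρ (bracketMono u v) y = 0 := by
    intro u v y h
    rw [bracketMono_eq, map_sub, map_smul, map_smul]
    simp only [LinearMap.sub_apply, LinearMap.smul_apply]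
    simp [h]
  -- brackets kill w when both factors do
  have hKbr : ∀ u v : WIdx m n,
      (∀ I c, ρ (Finsupp.single ((u.1, I, c) : WIdx m n) 1) w = 0) →
      (∀ I c, ρ (Finsupp.single ((v.1, I, c) : WIdx m n) 1) w = 0) →
      ρ (bracketMono u v) w = 0 := by
    intro u v hu hv
    have h := hrep (parWIdx u) (parWIdx v) _ _ (hXpar u) (hXpar v)
    rw [bracketW_single] at h
    rw [h]
    have hu' : ρ (Finsupp.single u (1:ℂ)) w = 0 := hu u.2.1 u.2.2
    have hv' : ρ (Finsupp.single v (1:ℂ)) w = 0 := hv v.2.1 v.2.2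
    simp only [LinearMap.sub_apply, Module.End.mul_apply, LinearMap.smul_apply, hu', hv',
      map_zero, smul_zero, sub_zero]
  have hkill : ∀ (β γ : Fin m → ℤ) (i : Fin m) (I : Finset (Fin n)) (c : Fin m ⊕ Fin n),
      (∀ I c, ρ (Finsupp.single ((β, I, c) : WIdx m n) 1) w = 0) →
      (∀ I c, ρ (Finsupp.single ((γ, I, c) : WIdx m n) 1) w = 0) →
      ((γ i : ℂ)) • ρ (Finsupp.single ((β + γ, I, c) : WIdx m n) 1) w =
        dCoeff c β ∅ • ρ (Finsupp.single ((β + γ, I, Sum.inl i) : WIdx m n) 1) w := by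
    intro β γ i I c hβ hγ
    have h0 := hKbr (β, ∅, Sum.inl i) (γ, I, c) hβ hγ
    rw [bracketMono_d, map_sub, map_smul, map_smul] at h0
    simp only [LinearMap.sub_apply, LinearMap.smul_apply] at h0
    exact sub_eq_zero.mp h0
  have hstep : ∀ (β : Fin m → ℤ) (j i1 : Fin m), i1 ≠ j → β i1 ≠ 0 →
      (∀ I c, ρ (Finsupp.single ((β, I, c) : WIdx m n) 1) w = 0) →
      (∀ I c, ρ (Finsupp.single ((β + Pi.single j 1, I, c) : WIdx m n) 1) w = 0) := by
    intro β j i1 hij hb hK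
    have hb' : ((β i1 : ℂ)) ≠ 0 := Int.cast_ne_zero.mpr hb
    have hKe : ∀ (k : Fin m) (I : Finset (Fin n)) (c : Fin m ⊕ Fin n),
        ρ (Finsupp.single ((Pi.single k 1, I, c) : WIdx m n) 1) w = 0 :=
      fun k I c => hann k _ (hXgr _ I c)
    have hA : ∀ (I : Finset (Fin n)) (k : Fin m), k ≠ j →
        ρ (Finsupp.single ((β + Pi.single j 1, I, Sum.inl k) : WIdx m n) 1) w = 0 := by
      intro I k hkj
      have h := hkill (Pi.single j 1) β i1 I (Sum.inl k) (hKe j) hK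
      rw [add_comm (Pi.single j 1) β] at h
      rw [dCoeff_inl, Pi.single_eq_of_ne hkj] at h
      rw [Int.cast_zero, zero_smul] at h
      exact (smul_eq_zero.mp h).resolve_left hb'
    have hAj : ∀ (I : Finset (Fin n)),
        ρ (Finsupp.single ((β + Pi.single j 1, I, Sum.inl j) : WIdx m n) 1) w = 0 := by
      intro I
      have h := hkill β (Pi.single j 1) j I (Sum.inl i1) hK (hKe j)
      rw [Pi.single_eq_same, dCoeff_inl, hA I i1 hij, smul_zero] at h
      exact (smul_eq_zero.mp h.symm).resolve_left hb'
    intro I c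
    rcases c with k | j'
    · by_cases hkj : k = j
      · subst hkj; exact hAj I
      · exact hA I k hkj
    · have h := hkill β (Pi.single j 1) j I (Sum.inr j') hK (hKe j)
      have hz : dCoeff (Sum.inr j' : Fin m ⊕ Fin n) β ∅ = 0 := by simp [dCoeff]
      rw [Pi.single_eq_same, hz, zero_smul] at h
      simpa using h
  -- two distinct indices
  obtain ⟨i0, i1, hne⟩ : ∃ i0 i1 : Fin m, i0 ≠ i1 :=
    ⟨⟨0, by omega⟩, ⟨1, by omega⟩, by simp [Fin.ext_iff]⟩
  set γ0 : Fin m → ℤ := Pi.single i0 1 + Pi.single i1 1 with hγ0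
  have hγ0i0 : γ0 i0 = 1 := by
    simp [hγ0, Pi.single_eq_same, Pi.single_eq_of_ne hne]
  have hγ0i1 : γ0 i1 = 1 := by
    simp [hγ0, Pi.single_eq_same, Pi.single_eq_of_ne hne.symm]
  have hγ0b : ∀ i, 0 ≤ γ0 i ∧ γ0 i ≤ 1 := by
    intro i
    by_cases h1 : i = i0
    · subst h1; rw [hγ0i0]; omega
    · by_cases h2 : i = i1
      · subst h2; rw [hγ0i1]; omega
      · have : γ0 i = 0 := by
          simp [hγ0, Pi.single_eq_of_ne h1, Pi.single_eq_of_ne h2]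
        omega
  have hgrow : ∀ β : Fin m → ℤ, β i0 ≠ 0 → β i1 ≠ 0 →
      (∀ I c, ρ (Finsupp.single ((β, I, c) : WIdx m n) 1) w = 0) →
      ∀ j I c, ρ (Finsupp.single ((β + Pi.single j 1, I, c) : WIdx m n) 1) w = 0 := by
    intro β h0 h1 hK j
    by_cases hj : j = i0
    · exact hstep β j i1 (by rw [hj]; exact hne.symm) h1 hK
    · exact hstep β j i0 (fun hh => hj hh.symm) h0 hK
  have hmain : ∀ t : ℕ, ∀ δ : Fin m → ℤ, (∀ i, 0 ≤ δ i) → (∑ i, (δ i).toNat) = t →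
      ∀ I c, ρ (Finsupp.single ((γ0 + δ, I, c) : WIdx m n) 1) w = 0 := by
    intro t
    induction t with
    | zero =>
      intro δ hnn hs I c
      have hδ : δ = 0 := by
        funext i
        have h1 : (δ i).toNat = 0 :=
          Finset.sum_eq_zero_iff.mp hs i (Finset.mem_univ i)
        have := hnn i
        simp only [Pi.zero_apply]
        omega
      subst hδ
      rw [add_zero, hγ0]
      exact hstep (Pi.single i0 1) i1 i0 hne
        (by rw [Pi.single_eq_same]; exact one_ne_zero)
        (fun I c => hann i0 _ (hXgr _ I c)) I c
    | succ t ih =>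
      intro δ hnn hs I c
      have hex : ∃ j, 0 < δ j := by
        by_contra hcon
        push_neg at hcon
        have hz : ∀ i ∈ Finset.univ, (δ i).toNat = 0 := fun i _ => by
          have := hcon i; omega
        rw [Finset.sum_eq_zero hz] at hs
        omega
      obtain ⟨j, hj⟩ := hex
      set δ' : Fin m → ℤ := δ - Pi.single j 1 with hδ'
      have hnn' : ∀ i, 0 ≤ δ' i := by
        intro i
        by_cases h : i = j
        · subst h; have := hj; simp [hδ', Pi.single_eq_same]; omega
        · simp [hδ', Pi.single_eq_of_ne h]; exact hnn i
      have hs' : (∑ i, (δ' i).toNat) = t := by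
        rw [← Finset.add_sum_erase _ _ (Finset.mem_univ j)] at hs ⊢
        have h3 : ∑ i ∈ Finset.univ.erase j, (δ' i).toNat
            = ∑ i ∈ Finset.univ.erase j, (δ i).toNat :=
          Finset.sum_congr rfl fun i hi => by
            simp [hδ', Pi.single_eq_of_ne (Finset.mem_erase.mp hi).1]
        rw [h3]
        have h4 : (δ' j).toNat = (δ j).toNat - 1 := by
          simp [hδ', Pi.single_eq_same]
        have h5 : 1 ≤ (δ j).toNat := by omega
        omega
      have hp0 : (γ0 + δ') i0 ≠ 0 := by
        have := hnn' i0
        simp only [Pi.add_apply]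
        rw [hγ0i0]
        omega
      have hp1 : (γ0 + δ') i1 ≠ 0 := by
        have := hnn' i1
        simp only [Pi.add_apply]
        rw [hγ0i1]
        omega
      have heq : γ0 + δ' + Pi.single j 1 = γ0 + δ := by rw [hδ']; abel
      have key := hgrow (γ0 + δ') hp0 hp1 (ih _ hnn' hs') j I c
      rwa [heq] at key
  have hw' : ∀ α : Fin m → ℤ, (∀ i, 0 < α i) → ∀ I c,
      ρ (Finsupp.single ((α, I, c) : WIdx m n) 1) w = 0 := by
    intro α hα I c
    have hnn : ∀ i, 0 ≤ (α - γ0) i := by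
      intro i
      have := (hγ0b i).2
      have := hα i
      simp only [Pi.sub_apply]
      omega
    have h := hmain (∑ i, ((α - γ0) i).toNat) (α - γ0) hnn rfl I c
    have heq : γ0 + (α - γ0) = α := by abel
    rwa [heq] at h
  -- the submodule M'
  let M' : Submodule ℂ V :=
    { carrier := {v | ∃ N : ℕ, ∀ α : Fin m → ℤ, (∀ i, (N:ℤ) < α i) →
        ∀ (I : Finset (Fin n)) (c : Fin m ⊕ Fin n),
          ρ (Finsupp.single ((α, I, c) : WIdx m n) 1) v = 0}
      add_mem' := by
        rintro a b ⟨Na, ha⟩ ⟨Nb, hb⟩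
        refine ⟨Na + Nb, fun α hα I c => ?_⟩
        have hα1 : ∀ i, (Na:ℤ) < α i := by
          intro i; have := hα i; push_cast at this ⊢; omega
        have hα2 : ∀ i, (Nb:ℤ) < α i := by
          intro i; have := hα i; push_cast at this ⊢; omega
        rw [map_add, ha α hα1 I c, hb α hα2 I c, add_zero]
      zero_mem' := ⟨0, fun α _ I c => map_zero _⟩
      smul_mem' := by
        rintro b v ⟨N, h⟩
        exact ⟨N, fun α hα I c => by rw [map_smul, h α hα I c, smul_zero]⟩ }
  have hwM : w ∈ M' :=
    ⟨0, fun α hα I c => hw' α (fun i => by have := hα i; simpa using this) I c⟩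
  -- M' is invariant
  have hsingleM : ∀ (u : WIdx m n) (v : V), v ∈ M' → ρ (Finsupp.single u 1) v ∈ M' := by
    rintro u v ⟨N, hN⟩
    refine ⟨N + ∑ i, (u.1 i).natAbs, fun α hα I c => ?_⟩
    have hα1 : ∀ i, (N:ℤ) < α i := by
      intro i; have := hα i; omega
    have hα2 : ∀ i, (N:ℤ) < α i + u.1 i := by
      intro i
      have h1 := hα i
      have h2 : (u.1 i).natAbs ≤ ∑ i', (u.1 i').natAbs :=
        Finset.single_le_sum (f := fun i' => (u.1 i').natAbs)
          (fun _ _ => Nat.zero_le _) (Finset.mem_univ i)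
      omega
    rw [hcomm (α, I, c) u v, hN α hα1 I c, map_zero, smul_zero, add_zero]
    exact hbrkill (α, I, c) u v (fun I' c' => hN (α + u.1) hα2 I' c')
  have hinv : ∀ x : WSp m n, ∀ v ∈ M', ρ x v ∈ M' := by
    intro x v hv
    induction x using Finsupp.induction_linear with
    | zero => rw [map_zero]; exact M'.zero_mem
    | add f g hf hg =>
      rw [map_add]
      exact M'.add_mem hf hg
    | single u b =>
      have hb : Finsupp.single u b = b • Finsupp.single u 1 := by
        rw [Finsupp.smul_single', mul_one]
      rw [hb, map_smul]
      exact M'.smul_mem b (hsingleM u v hv)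
  -- M' is graded
  have hgrade : M' = (M' ⊓ gV 0) ⊔ (M' ⊓ gV 1) := by
    refine le_antisymm ?_ (sup_le inf_le_left inf_le_left)
    intro v hv
    obtain ⟨N, hN⟩ := hv
    have hvtop : v ∈ gV 0 ⊔ gV 1 := by
      rw [codisjoint_iff.mp hcompl.codisjoint]; exact Submodule.mem_top
    obtain ⟨v0, h0, v1, h1, hsum⟩ := Submodule.mem_sup.mp hvtop
    have hv0 : v0 ∈ M' := by
      refine ⟨N, fun α hα I c => ?_⟩
      have ha := hpar (parWIdx ((α, I, c) : WIdx m n)) _ (hXpar ((α, I, c) : WIdx m n)) 0 v0 h0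
      have hb := hpar (parWIdx ((α, I, c) : WIdx m n)) _ (hXpar ((α, I, c) : WIdx m n)) 1 v1 h1
      have hab : ρ (Finsupp.single ((α, I, c) : WIdx m n) 1) v0 +
          ρ (Finsupp.single ((α, I, c) : WIdx m n) 1) v1 = 0 := by
        rw [← map_add, hsum]; exact hN α hα I c
      have hp : ((parWIdx ((α, I, c) : WIdx m n) : ZMod 2) = 0) ∨
          ((parWIdx ((α, I, c) : WIdx m n) : ZMod 2) = 1) := by
        generalize (parWIdx ((α, I, c) : WIdx m n) : ZMod 2) = z
        revert z; decide
      rcases hp with hp | hp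
      · rw [hp, add_zero] at ha hb
        have hmem : ρ (Finsupp.single ((α, I, c) : WIdx m n) 1) v0 ∈ gV 0 ⊓ gV 1 :=
          Submodule.mem_inf.mpr ⟨ha, by
            rw [add_eq_zero_iff_eq_neg.mp hab]; exact (gV 1).neg_mem hb⟩
        have := hcompl.disjoint.le_bot hmem
        simpa using this
      · rw [hp] at ha hb
        rw [zero_add] at ha
        have h11 : ((1 : ZMod 2) + 1) = 0 := by decide
        rw [h11] at hb
        have hmem : ρ (Finsupp.single ((α, I, c) : WIdx m n) 1) v0 ∈ gV 0 ⊓ gV 1 :=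
          Submodule.mem_inf.mpr ⟨by
            rw [add_eq_zero_iff_eq_neg.mp hab]; exact (gV 0).neg_mem hb, ha⟩
        have := hcompl.disjoint.le_bot hmem
        simpa using this
    have hv1 : v1 ∈ M' := by
      have hveq : v1 = v - v0 := by rw [← hsum]; abel
      rw [hveq]
      exact M'.sub_mem ⟨N, hN⟩ hv0
    exact Submodule.mem_sup.mpr
      ⟨v0, Submodule.mem_inf.mpr ⟨hv0, h0⟩, v1, Submodule.mem_inf.mpr ⟨hv1, h1⟩, hsum⟩
  rcases hsimp M' hgrade hinv with hbot | htop
  · exfalso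
    have : w ∈ (⊥ : Submodule ℂ V) := hbot ▸ hwM
    simp only [Submodule.mem_bot] at this
    exact hw0 this
  · intro v
    have hv : v ∈ M' := htop ▸ Submodule.mem_top
    obtain ⟨N, hN⟩ := hv
    refine ⟨N, fun α hα x hx => ?_⟩
    refine Submodule.span_induction ?_ ?_ ?_ ?_ hx
    · rintro y ⟨I, c, rfl⟩
      exact hN α hα I c
    · simp
    · intro y z _ _ hy hz
      rw [map_add, LinearMap.add_apply, hy, hz, add_zero]
    · intro b y _ hy
      rw [map_smul, LinearMap.smul_apply, hy, smul_zero]
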